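/- arXiv:2308.04095 — 2 statements merged into one kernel-verified Lean document; each statement's English description precedes it below -/
import Mathlib

section
/- Suppose A : ℝ^n → ℝ^m is linear, f ∈ Im(A), f ≠ 0, and R : ℝ^n → ℝ satisfies R(u) ≤ M for all u and R(0) = 0 with M ≥ 0. Define G(u) = R(u) + (λ/2)‖Au − f‖₂². If λ > 2M/‖f‖₂², then 0 is not a global minimizer of G. -/
theorem stmt_7 (n m : ℕ)
    (A : EuclideanSpace ℝ (Fin n) →ₗ[ℝ] EuclideanSpace ℝ (Fin m))
    (f : EuclideanSpace ℝ (Fin m)) (hf : f ∈ LinearMap.range A) (hf0 : f ≠ 0)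
    (R : EuclideanSpace ℝ (Fin n) → ℝ) (M : ℝ) (hM : 0 ≤ M)
    (hR : ∀ u, R u ≤ M) (hR0 : R 0 = 0)
    (lam : ℝ) (hlam : lam > 2 * M / ‖f‖ ^ 2)
    (G : EuclideanSpace ℝ (Fin n) → ℝ)
    (hG : ∀ u, G u = R u + lam / 2 * ‖A u - f‖ ^ 2) :
    ¬ (∀ u, G 0 ≤ G u) := by
  intro h
  obtain ⟨u, hu⟩ := hf
  have hfn : (0:ℝ) < ‖f‖ ^ 2 := pow_pos (norm_pos_iff.mpr hf0) 2
  have hGu : G u = R u := by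
    rw [hG, hu, sub_self, norm_zero]; ring
  have hG0 : G 0 = lam / 2 * ‖f‖ ^ 2 := by
    rw [hG, map_zero, zero_sub, norm_neg, hR0, zero_add]
  have hlam' : M < lam / 2 * ‖f‖ ^ 2 := by
    rw [gt_iff_lt, div_lt_iff₀ hfn] at hlam
    nlinarith
  have := h u
  rw [hG0, hGu] at this
  linarith [hR u]
end

section
/- Let u : ℝ → ℝ^n be differentiable and satisfy u'(t) = −λAᵀ(Au − f) − (p − R(u)q)/H(u), where at each time p ∈ ∂J(u), q ∈ ∂H(u), J, H are convex positively one-homogeneous, H(u) > 0, and R = J/H. Then d/dt(‖u‖₂²) = −2λ(‖Au‖₂² − ⟨f, Au⟩). -/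
open scoped RealInnerProductSpace

theorem stmt_10 (n m : ℕ)
    (J H : EuclideanSpace ℝ (Fin n) → ℝ)
    (hJconv : ConvexOn ℝ Set.univ J) (hHconv : ConvexOn ℝ Set.univ H)
    (hJhom : ∀ (α : ℝ), 0 ≤ α → ∀ v, J (α • v) = α * J v)
    (hHhom : ∀ (α : ℝ), 0 ≤ α → ∀ v, H (α • v) = α * H v)
    (A : EuclideanSpace ℝ (Fin n) →ₗ[ℝ] EuclideanSpace ℝ (Fin m))
    (f : EuclideanSpace ℝ (Fin m)) (lam : ℝ) (hlam : 0 < lam)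
    (R : EuclideanSpace ℝ (Fin n) → ℝ) (hR : ∀ v, R v = J v / H v)
    (u : ℝ → EuclideanSpace ℝ (Fin n))
    (p q : ℝ → EuclideanSpace ℝ (Fin n))
    (hHpos : ∀ t, 0 < H (u t))
    (hp : ∀ t, ∀ v, J v ≥ J (u t) + ⟪p t, v - u t⟫)
    (hq : ∀ t, ∀ v, H v ≥ H (u t) + ⟪q t, v - u t⟫)
    (hflow : ∀ t, HasDerivAt u
      (-(lam • (LinearMap.adjoint A) (A (u t) - f))
        - (H (u t))⁻¹ • (p t - R (u t) • q t)) t) :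
    ∀ t, HasDerivAt (fun s => ‖u s‖ ^ 2)
      (-2 * lam * (‖A (u t)‖ ^ 2 - ⟪f, A (u t)⟫)) t := by
  intro t
  -- ⟪p t, u t⟫ = J (u t)
  have hJ0 : J 0 = 0 := by have := hJhom 0 le_rfl 0; simpa using this
  have hH0 : H 0 = 0 := by have := hHhom 0 le_rfl 0; simpa using this
  have hpu : ⟪p t, u t⟫ = J (u t) := by
    have h1 := hp t 0
    have h2 := hp t ((2:ℝ) • u t)
    rw [hJhom 2 (by norm_num) (u t)] at h2
    have : ((2:ℝ) • u t) - u t = u t := by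
      rw [two_smul]; abel
    rw [this] at h2
    simp only [hJ0, zero_sub, inner_neg_right] at h1
    linarith
  have hqu : ⟪q t, u t⟫ = H (u t) := by
    have h1 := hq t 0
    have h2 := hq t ((2:ℝ) • u t)
    rw [hHhom 2 (by norm_num) (u t)] at h2
    have : ((2:ℝ) • u t) - u t = u t := by
      rw [two_smul]; abel
    rw [this] at h2
    simp only [hH0, zero_sub, inner_neg_right] at h1
    linarith
  set u' := -(lam • (LinearMap.adjoint A) (A (u t) - f))
      - (H (u t))⁻¹ • (p t - R (u t) • q t) with hu'
  have key : ⟪u', u t⟫ = -lam * (‖A (u t)‖ ^ 2 - ⟪f, A (u t)⟫) := by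
    have hadj : ⟪(LinearMap.adjoint A) (A (u t) - f), u t⟫ = ⟪A (u t) - f, A (u t)⟫ :=
      LinearMap.adjoint_inner_left A _ _
    have hzero : ⟪p t - R (u t) • q t, u t⟫ = 0 := by
      rw [inner_sub_left, inner_smul_left, hpu, hqu, hR]
      simp only [RCLike.star_def, starRingEnd_apply, star_trivial]
      rw [div_mul_cancel₀ _ (hHpos t).ne', sub_self]
    rw [hu', inner_sub_left, inner_smul_left, hzero, inner_neg_left, inner_smul_left,
      hadj, inner_sub_left, real_inner_self_eq_norm_sq]
    simp only [RCLike.star_def, starRingEnd_apply, star_trivial]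
    ring
  have hd := ((hflow t).inner ℝ (hflow t))
  have h2 : HasDerivAt (fun s => ⟪u s, u s⟫) (-2 * lam * (‖A (u t)‖ ^ 2 - ⟪f, A (u t)⟫)) t := by
    refine hd.congr_deriv ?_
    rw [← hu']
    have hc : (⟪u t, u'⟫ : ℝ) = ⟪u', u t⟫ := real_inner_comm _ _
    rw [hc, key]; ring
  have heq : (fun s => ‖u s‖ ^ 2) = fun s => ⟪u s, u s⟫ := by
    funext s; rw [real_inner_self_eq_norm_sq]
  rw [heq]
  exact h2
end
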